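/- Let f : ℤ → ℤ satisfy the step condition |f x - x| ≤ 1 for all x. Then every periodic point of f has minimal period at most 2: if f^[k] s = s for some k ≥ 1, then f (f s) = s. (Part of Corollary 3.8 of the paper: because a single state switch changes the defector count by at most one, any cycle in the state-transition graph can contain at most two states.) -/
import Mathlib

/-- Discrete intermediate value: a ±1-step sequence crossing down past `v`
must sit at `v+1` and then drop to `≤ v`. -/
lemma step_cross (g : ℕ → ℤ) (hg : ∀ n, |g (n + 1) - g n| ≤ 1)
    (v : ℤ) (i j : ℕ) (hij : i ≤ j) (hi : v < g i) (hj : g j ≤ v) :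
    ∃ n, g n = v + 1 ∧ g (n + 1) ≤ v := by
  classical
  have hP : ∃ m, g (i + m) ≤ v := ⟨j - i, by rwa [Nat.add_sub_cancel' hij]⟩
  have hn0 : g (i + Nat.find hP) ≤ v := Nat.find_spec hP
  have hne : Nat.find hP ≠ 0 := by
    intro h
    rw [h, Nat.add_zero] at hn0
    omega
  obtain ⟨n', hn'⟩ := Nat.exists_eq_succ_of_ne_zero hne
  have hmin : ¬ g (i + n') ≤ v := Nat.find_min hP (by omega)
  have hs := abs_le.mp (hg (i + n'))
  have heq : i + Nat.find hP = i + n' + 1 := by omega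
  rw [heq] at hn0
  exact ⟨i + n', by omega, hn0⟩

/-- Any periodic point of a step-condition map on ℤ has minimal period at most 2. -/
theorem periodic_point_period_le_two (f : ℤ → ℤ)
    (hstep : ∀ x : ℤ, |f x - x| ≤ 1)
    {s : ℤ} {k : ℕ} (hk : 1 ≤ k) (hper : f^[k] s = s) :
    f (f s) = s := by
  have hg : ∀ n, |f^[n + 1] s - f^[n] s| ≤ 1 := by
    intro n
    rw [Function.iterate_succ_apply']
    exact hstep _
  have hs := abs_le.mp (hstep s)
  rcases lt_trichotomy (f s) s with hlt | heq | hgt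
  · -- f s = s - 1
    have hfs : f s = s - 1 := by omega
    obtain ⟨n, hn1, hn2⟩ := step_cross (fun n => -(f^[n] s))
      (by
        intro n
        have := abs_le.mp (hg n)
        rw [abs_le]
        constructor <;> simp only [neg_sub_neg] <;> omega)
      (-s) 1 k hk
      (by show -s < -(f^[1] s); rw [Function.iterate_one, hfs]; omega)
      (by show -(f^[k] s) ≤ -s; rw [hper])
    simp only [neg_eq_iff_eq_neg] at hn1 hn2
    have hfn : f^[n] s = s - 1 := by omega
    have hiter : f^[n + 1] s = f (s - 1) := by
      rw [Function.iterate_succ_apply', hfn]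
    have hstep2 := abs_le.mp (hstep (s - 1))
    rw [hiter] at hn2
    rw [hfs]
    omega
  · rw [heq, heq]
  · -- f s = s + 1
    have hfs : f s = s + 1 := by omega
    obtain ⟨n, hn1, hn2⟩ := step_cross (fun n => f^[n] s) hg
      s 1 k hk
      (by show s < f^[1] s; rw [Function.iterate_one, hfs]; omega)
      (by show f^[k] s ≤ s; rw [hper])
    have hiter : f^[n + 1] s = f (s + 1) := by
      rw [Function.iterate_succ_apply']
      rw [hn1]
    have hstep2 := abs_le.mp (hstep (s + 1))
    rw [hiter] at hn2
    rw [hfs]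
    omega
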